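/- Let Y be a nonempty finite type, π₀ a policy with π₀(y) > 0 for all y, r : Y → ℝ, and β > 0. Let T : ℝ^Y → ℝ^Y be differentiable on an open neighborhood of Δ_Y and map Δ_Y into Δ_Y, and define the inference-time win rate W^T(π) := Σ_{y,z} w_r(y,z)·(Tπ)(y)·(Tπ₀)(z). If π* maximizes π ↦ W^T(π) − β·KL(π‖π₀) over Δ_Y and π*(y) > 0 for all y, then, setting R(y) := ∂W^T(π)/∂π(y)|_{π=π*} = Σ_z C^{Tπ₀}(z)·(∂(Tπ)(z)/∂π(y))|_{π=π*}, where C^{Tπ₀}(z) := Σ_{z'} w_r(z,z')·(Tπ₀)(z'), the optimal policy satisfies π*(y) = π₀(y)·e^{R(y)/β} / Σ_z π₀(z)·e^{R(z)/β} for all y. -/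

import Mathlib

/-- Let `T : ℝ^Y → ℝ^Y` be differentiable on an open neighborhood `U` of the
simplex `Δ` and map `Δ` into `Δ`. If `π*` (with full support) maximizes the KL-regularized
inference-time win rate over `Δ`, then with
`R(y) := Σ_z C^{Tπ₀}(z) · ∂(Tπ)(z)/∂π(y) |_{π=π*}` (where `C^{Tπ₀}(z) = Σ_{z'} w_r(z,z')·(Tπ₀)(z')`),
the optimal policy is the Gibbs policy: `π*(y) = π₀(y)e^{R(y)/β} / Σ_z π₀(z)e^{R(z)/β}`. -/
theorem stmt_2 {Y : Type*} [Fintype Y] [Nonempty Y] [DecidableEq Y]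
    (π₀ : Y → ℝ) (hπ₀pos : ∀ y, 0 < π₀ y) (hπ₀sum : ∑ y, π₀ y = 1)
    (r : Y → ℝ) (β : ℝ) (hβ : 0 < β)
    (T : (Y → ℝ) → (Y → ℝ))
    (Δ : Set (Y → ℝ)) (hΔ : Δ = {π | (∀ y, 0 ≤ π y) ∧ ∑ y, π y = 1})
    (U : Set (Y → ℝ)) (hU : IsOpen U) (hΔU : Δ ⊆ U)
    (hTdiff : DifferentiableOn ℝ T U)
    (hTΔ : ∀ π ∈ Δ, T π ∈ Δ)
    (w : Y → Y → ℝ)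
    (hw : ∀ y z, w y z =
      (if r z < r y then (1 : ℝ) else 0) + (if r y = r z then 1 / 2 else 0))
    (W : (Y → ℝ) → ℝ)
    (hW : ∀ π, W π = ∑ y, ∑ z, w y z * T π y * T π₀ z)
    (πstar : Y → ℝ) (hπstarΔ : πstar ∈ Δ) (hπstar_pos : ∀ y, 0 < πstar y)
    (hmax : ∀ π ∈ Δ,
      W π - β * (∑ y, π y * Real.log (π y / π₀ y))
        ≤ W πstar - β * (∑ y, πstar y * Real.log (πstar y / π₀ y)))
    (C : Y → ℝ) (hC : ∀ z, C z = ∑ z', w z z' * T π₀ z')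
    (R : Y → ℝ)
    (hR : ∀ y, R y = ∑ z, C z * fderiv ℝ T πstar (Pi.single y 1) z) :
    ∀ y, πstar y = π₀ y * Real.exp (R y / β) / ∑ z, π₀ z * Real.exp (R z / β) := by
  -- basics
  have hπstarU : πstar ∈ U := hΔU hπstarΔ
  have hT : DifferentiableAt ℝ T πstar :=
    hTdiff.differentiableAt (hU.mem_nhds hπstarU)
  set D := fderiv ℝ T πstar with hD
  -- W as a linear functional of T π
  have hW' : ∀ π, W π = ∑ y, C y * T π y := by
    intro π
    rw [hW]
    refine Finset.sum_congr rfl fun y _ => ?_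
    rw [hC, Finset.sum_mul]
    exact Finset.sum_congr rfl fun z _ => by ring
  set L : (Y → ℝ) →L[ℝ] ℝ :=
    ∑ y, C y • ContinuousLinearMap.proj (R := ℝ) (φ := fun _ : Y => ℝ) y with hL
  have hLapp : ∀ f : Y → ℝ, L f = ∑ y, C y * f y := by
    intro f
    simp [hL, ContinuousLinearMap.sum_apply, smul_eq_mul]
  have hWfun : W = fun π => L (T π) := funext fun π => by rw [hW' π, hLapp]
  have hWderiv : HasFDerivAt W (L.comp D) πstar := by
    rw [hWfun]
    exact L.hasFDerivAt.comp πstar hT.hasFDerivAt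
  -- first-order condition
  have key : ∀ a b, R a - β * Real.log (πstar a / π₀ a)
      = R b - β * Real.log (πstar b / π₀ b) := by
    intro a b
    by_cases hab : a = b
    · rw [hab]
    set v : Y → ℝ := Pi.single a 1 - Pi.single b 1 with hv
    have hva : v a = 1 := by simp [hv, Pi.single_apply, hab]
    have hvb : v b = -1 := by simp [hv, Pi.single_apply, Ne.symm hab]
    have hvother : ∀ y, y ≠ a → y ≠ b → v y = 0 := by
      intro y h1 h2; simp [hv, Pi.single_apply, h1, h2]
    set c : ℝ → (Y → ℝ) := fun t => πstar + t • v with hc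
    have hc0 : c 0 = πstar := by simp [hc]
    set ε : ℝ := min (πstar a) (πstar b) with hε
    have hεpos : 0 < ε := lt_min (hπstar_pos a) (hπstar_pos b)
    have hsumv : ∑ y, v y = 0 := by
      simp [hv, Finset.sum_sub_distrib, Finset.sum_pi_single]
    have hmem : ∀ t ∈ Metric.ball (0 : ℝ) ε, c t ∈ Δ := by
      intro t ht
      rw [Real.ball_eq_Ioo] at ht
      obtain ⟨ht1, ht2⟩ := ht
      rw [zero_sub] at ht1
      rw [zero_add] at ht2
      rw [hΔ]
      constructor
      · intro y
        by_cases hya : y = a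
        · subst hya
          have : c t y = πstar y + t := by simp [hc, hva]
          rw [this]
          have : -πstar y < t := lt_of_le_of_lt (by simp [hε, neg_le_neg_iff, min_le_left]) ht1
          linarith
        · by_cases hyb : y = b
          · subst hyb
            have : c t y = πstar y - t := by simp [hc, hvb]; ring
            rw [this]
            have : t < πstar y := lt_of_lt_of_le ht2 (min_le_right _ _)
            linarith
          · have : c t y = πstar y := by simp [hc, hvother y hya hyb]
            rw [this]
            exact (hπstar_pos y).le
      · have : ∑ y, c t y = (∑ y, πstar y) + t * ∑ y, v y := by
          simp [hc, Finset.sum_add_distrib, Finset.mul_sum]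
        rw [this, hsumv]
        have hsum1 : ∑ y, πstar y = 1 := by
          have := hπstarΔ; rw [hΔ] at this; exact this.2
        rw [hsum1]; ring
    set φ : ℝ → ℝ :=
      fun t => W (c t) - β * ∑ y, c t y * Real.log (c t y / π₀ y) with hφ
    have hlocal : IsLocalMax φ 0 := by
      filter_upwards [Metric.ball_mem_nhds (0 : ℝ) hεpos] with t ht
      have := hmax (c t) (hmem t ht)
      simpa [hφ, hc0] using this
    -- derivative of c
    have hcv : HasDerivAt c v 0 := by
      have h1 : HasDerivAt (fun t : ℝ => t • v) ((1 : ℝ) • v) 0 :=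
        (hasDerivAt_id 0).smul_const v
      have := h1.const_add πstar
      simpa [hc] using this
    -- derivative of W ∘ c
    have hφW : HasDerivAt (fun t => W (c t)) (L (D v)) 0 := by
      have hW0 : HasFDerivAt W (L.comp D) (c 0) := hc0 ▸ hWderiv
      exact hW0.comp_hasDerivAt 0 hcv
    -- derivative of each KL term
    have hφg : ∀ y : Y, HasDerivAt (fun t => c t y * Real.log (c t y / π₀ y))
        (v y * (Real.log (πstar y / π₀ y) + 1)) 0 := by
      intro y
      have hu : HasDerivAt (fun t => c t y) (v y) 0 := by
        have h1 : HasDerivAt (fun t : ℝ => t * v y) (1 * v y) 0 :=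
          (hasDerivAt_id 0).mul_const (v y)
        have := h1.const_add (πstar y)
        simpa [hc] using this
      have hc0y : c 0 y = πstar y := by rw [hc0]
      have hπy := hπstar_pos y
      have hπ0y := hπ₀pos y
      have hne : c 0 y / π₀ y ≠ 0 := by
        rw [hc0y]; exact (div_pos hπy hπ0y).ne'
      have hlog : HasDerivAt (fun t => Real.log (c t y / π₀ y))
          ((v y / π₀ y) / (c 0 y / π₀ y)) 0 :=
        (hu.div_const (π₀ y)).log hne
      have h := hu.mul hlog
      have heq : v y * Real.log (c 0 y / π₀ y) + c 0 y * (v y / π₀ y / (c 0 y / π₀ y))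
          = v y * (Real.log (πstar y / π₀ y) + 1) := by
        rw [hc0y]
        field_simp
      rw [heq] at h
      exact h
    have hφsum : HasDerivAt (fun t => ∑ y, c t y * Real.log (c t y / π₀ y))
        (∑ y, v y * (Real.log (πstar y / π₀ y) + 1)) 0 :=
      HasDerivAt.fun_sum fun y _ => hφg y
    have hφderiv : HasDerivAt φ
        (L (D v) - β * ∑ y, v y * (Real.log (πstar y / π₀ y) + 1)) 0 :=
      hφW.sub (hφsum.const_mul β)
    have hzero := hlocal.hasDerivAt_eq_zero hφderiv
    -- compute L (D v)
    have hLDv : L (D v) = R a - R b := by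
      have hDv : D v = D (Pi.single a 1) - D (Pi.single b 1) := by
        rw [hv]; exact map_sub D _ _
      rw [hLapp, hR a, hR b, ← Finset.sum_sub_distrib]
      refine Finset.sum_congr rfl fun y _ => ?_
      rw [hDv]
      simp [mul_sub]
    -- compute the KL direction sum
    have hvsum : ∀ g : Y → ℝ, ∑ y, v y * g y = g a - g b := by
      intro g
      have : ∀ y, v y * g y = (if a = y then g y else 0) - (if b = y then g y else 0) := by
        intro y
        by_cases hya : y = a
        · subst hya; rw [hva]; simp [Ne.symm hab]
        · by_cases hyb : y = b
          · subst hyb; rw [hvb]; simp [hab, Ne.symm hya]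
          · rw [hvother y hya hyb]; simp [Ne.symm hya, Ne.symm hyb]
      simp only [this, Finset.sum_sub_distrib, Finset.sum_ite_eq, Finset.mem_univ, if_true]
    rw [hLDv, hvsum] at hzero
    have : R a - R b - β * (Real.log (πstar a / π₀ a) - Real.log (πstar b / π₀ b)) = 0 := by
      linarith [hzero]
    linarith [this]
  -- from the first-order condition, derive the Gibbs form
  intro y
  set S : ℝ := ∑ z, π₀ z * Real.exp (R z / β) with hS
  have hSpos : 0 < S := by
    rw [hS]
    exact Finset.sum_pos (fun z _ => by have := hπ₀pos z; positivity) Finset.univ_nonempty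
  have hconst : ∀ z, πstar z / (π₀ z * Real.exp (R z / β))
      = πstar y / (π₀ y * Real.exp (R y / β)) := by
    intro z
    have h := key z y
    have hz : 0 < πstar z / π₀ z := div_pos (hπstar_pos z) (hπ₀pos z)
    have hy : 0 < πstar y / π₀ y := div_pos (hπstar_pos y) (hπ₀pos y)
    have h2 : Real.log (πstar z / π₀ z) - R z / β
        = Real.log (πstar y / π₀ y) - R y / β := by
      field_simp at h ⊢
      linarith
    have h3 := congrArg Real.exp h2
    rw [Real.exp_sub, Real.exp_sub, Real.exp_log hz, Real.exp_log hy] at h3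
    calc πstar z / (π₀ z * Real.exp (R z / β))
        = (πstar z / π₀ z) / Real.exp (R z / β) := by rw [div_div]
      _ = (πstar y / π₀ y) / Real.exp (R y / β) := h3
      _ = πstar y / (π₀ y * Real.exp (R y / β)) := by rw [div_div]
  set k : ℝ := πstar y / (π₀ y * Real.exp (R y / β)) with hk
  have hkz : ∀ z, πstar z = k * (π₀ z * Real.exp (R z / β)) := by
    intro z
    have hz : π₀ z * Real.exp (R z / β) ≠ 0 := by have := hπ₀pos z; positivity
    have := hconst z
    field_simp [hz] at this
    rw [div_eq_iff (hπ₀pos z).ne'] at this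
    rw [this]; ring
  have hsum1 : ∑ z, πstar z = 1 := by
    have := hπstarΔ; rw [hΔ] at this; exact this.2
  have hkS : k * S = 1 := by
    rw [hS, Finset.mul_sum, ← hsum1]
    exact Finset.sum_congr rfl fun z _ => (hkz z).symm
  have hkval : k = 1 / S := by
    field_simp at hkS ⊢
    linarith
  rw [hkz y, hkval]
  field_simp [hS]
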